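/- A finite direct product of boundedly acyclic groups is boundedly acyclic: if G_1, …, G_n are groups with H^q_b(G_i; ℝ) = 0 for all q > 0, then H^q_b(G_1 × ⋯ × G_n; ℝ) = 0 for all q > 0. -/

import Mathlib

/-- A real-valued function is bounded. -/
def IsBddFun {α : Type*} (f : α → ℝ) : Prop := ∃ C : ℝ, ∀ x, |f x| ≤ C

/-- A homogeneous cochain is `G`-invariant. -/
def IsInvCochain {G : Type*} [Group G] {n : ℕ} (c : (Fin n → G) → ℝ) : Prop :=
  ∀ (g : G) (x : Fin n → G), c (fun i => g * x i) = c x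

/-- The simplicial coboundary on homogeneous cochains. -/
noncomputable def gcoboundary {G : Type*} [Group G] {n : ℕ}
    (c : (Fin n → G) → ℝ) : (Fin (n + 1) → G) → ℝ :=
  fun x => ∑ i : Fin (n + 1), (-1 : ℝ) ^ (i : ℕ) * c (x ∘ i.succAbove)

/-- Vanishing of `H^q_b(G;ℝ)` (`q ≥ 1`): every invariant bounded cocycle is the coboundary
of an invariant bounded cochain. -/
def HbVanishAt (G : Type*) [Group G] (q : ℕ) : Prop :=
  ∀ c : (Fin (q + 1) → G) → ℝ, IsInvCochain c → IsBddFun c → gcoboundary c = 0 →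
    ∃ b : (Fin q → G) → ℝ, IsInvCochain b ∧ IsBddFun b ∧ gcoboundary b = c


namespace PBA

lemma val_succAbove {m : ℕ} (p : Fin (m + 1)) (t : Fin m) :
    (p.succAbove t : ℕ) = if (t : ℕ) < (p : ℕ) then (t : ℕ) else (t : ℕ) + 1 := by
  rw [Fin.succAbove]
  split_ifs with h1 h2 h2
  · rfl
  · exact absurd (by simpa [Fin.lt_def] using h1) h2
  · exact absurd (by simpa [Fin.lt_def] using h2) h1
  · rfl

noncomputable def cb {X : Type*} {n : ℕ} (c : (Fin n → X) → ℝ) : (Fin (n + 1) → X) → ℝ :=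
  fun x => ∑ i : Fin (n + 1), (-1 : ℝ) ^ (i : ℕ) * c (x ∘ i.succAbove)

def flip2 {n : ℕ} (p : Fin (n + 2) × Fin (n + 1)) : Fin (n + 2) × Fin (n + 1) :=
  if h : (p.2 : ℕ) < (p.1 : ℕ) then
    (p.2.castSucc, ⟨(p.1 : ℕ) - 1, by omega⟩)
  else
    (p.2.succ, ⟨(p.1 : ℕ), by have h2 := p.2.isLt; omega⟩)

lemma flip2_val1 {n : ℕ} (p : Fin (n + 2) × Fin (n + 1)) :
    ((flip2 p).1 : ℕ) = if (p.2 : ℕ) < (p.1 : ℕ) then (p.2 : ℕ) else (p.2 : ℕ) + 1 := by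
  rw [flip2]; split_ifs <;> simp

lemma flip2_val2 {n : ℕ} (p : Fin (n + 2) × Fin (n + 1)) :
    ((flip2 p).2 : ℕ) = if (p.2 : ℕ) < (p.1 : ℕ) then (p.1 : ℕ) - 1 else (p.1 : ℕ) := by
  rw [flip2]; split_ifs <;> simp

lemma flip2_flip2 {n : ℕ} (p : Fin (n + 2) × Fin (n + 1)) : flip2 (flip2 p) = p := by
  have h1 := flip2_val1 (flip2 p)
  have h2 := flip2_val2 (flip2 p)
  have h3 := flip2_val1 p
  have h4 := flip2_val2 p
  refine Prod.ext (Fin.ext ?_) (Fin.ext ?_) <;> split_ifs at * <;> omega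

lemma flip2_ne {n : ℕ} (p : Fin (n + 2) × Fin (n + 1)) : flip2 p ≠ p := by
  intro hc
  have h1 : ((flip2 p).1 : ℕ) = (p.1 : ℕ) := by rw [hc]
  have h3 := flip2_val1 p
  split_ifs at h3 <;> omega

lemma flip2_comp {n : ℕ} (p : Fin (n + 2) × Fin (n + 1)) :
    (flip2 p).1.succAbove ∘ (flip2 p).2.succAbove = p.1.succAbove ∘ p.2.succAbove := by
  funext k
  have h1 := flip2_val1 p
  have h2 := flip2_val2 p
  have hk := k.isLt
  have hp1 := p.1.isLt
  have hp2 := p.2.isLt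
  apply Fin.ext
  simp only [Function.comp_apply, val_succAbove]
  split_ifs at * <;> omega

lemma flip2_parity {n : ℕ} (p : Fin (n + 2) × Fin (n + 1)) :
    (-1 : ℝ) ^ (((flip2 p).1 : ℕ) + ((flip2 p).2 : ℕ)) = -(-1 : ℝ) ^ ((p.1 : ℕ) + (p.2 : ℕ)) := by
  have h1 := flip2_val1 p
  have h2 := flip2_val2 p
  have key : ∀ a b : ℕ, a + 1 = b → (-1 : ℝ) ^ a = -(-1 : ℝ) ^ b ∨ (-1 : ℝ) ^ b = -(-1:ℝ) ^ a := by
    rintro a b rfl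
    left; rw [pow_succ]; ring
  rcases lt_or_ge (p.2 : ℕ) (p.1 : ℕ) with h | h
  · rw [if_pos h] at h1 h2
    have : (((flip2 p).1 : ℕ) + ((flip2 p).2 : ℕ)) + 1 = ((p.1 : ℕ) + (p.2 : ℕ)) := by omega
    rw [← this, pow_succ]; ring
  · rw [if_neg (by omega)] at h1 h2
    have : (((flip2 p).1 : ℕ) + ((flip2 p).2 : ℕ)) = ((p.1 : ℕ) + (p.2 : ℕ)) + 1 := by omega
    rw [this, pow_succ]; ring

lemma cb_cb {X : Type*} {n : ℕ} (c : (Fin n → X) → ℝ) : cb (cb c) = 0 := by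
  funext x
  show (∑ i : Fin (n + 2), (-1 : ℝ) ^ (i : ℕ) *
      ∑ j : Fin (n + 1), (-1 : ℝ) ^ (j : ℕ) * c ((x ∘ i.succAbove) ∘ j.succAbove)) = 0
  have step : ∀ i : Fin (n + 2), (-1 : ℝ) ^ (i : ℕ) *
      (∑ j : Fin (n + 1), (-1 : ℝ) ^ (j : ℕ) * c ((x ∘ i.succAbove) ∘ j.succAbove))
      = ∑ j : Fin (n + 1), (-1 : ℝ) ^ ((i : ℕ) + (j : ℕ)) * c (x ∘ (i.succAbove ∘ j.succAbove)) := by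
    intro i
    rw [Finset.mul_sum]
    refine Finset.sum_congr rfl fun j _ => ?_
    rw [pow_add]
    ring_nf
    rfl
  rw [Finset.sum_congr rfl fun i _ => step i, ← Finset.sum_product']
  refine Finset.sum_ninvolution flip2 ?_ (fun p _ => flip2_ne p) (fun p => Finset.mem_univ _)
    flip2_flip2
  intro p
  have hc : x ∘ ((flip2 p).1.succAbove ∘ (flip2 p).2.succAbove) = x ∘ (p.1.succAbove ∘ p.2.succAbove) := by
    rw [flip2_comp]
  rw [hc, flip2_parity]
  ring

lemma cons_comp_succAbove_zero {X : Type*} {n : ℕ} (a : X) (z : Fin (n + 1) → X) :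
    (Fin.cons a z : Fin (n + 2) → X) ∘ (Fin.succAbove 0) = z := by
  funext k
  simp [Fin.succAbove_zero]

lemma cons_comp_succAbove_succ {X : Type*} {n : ℕ} (a : X) (z : Fin (n + 1) → X)
    (j : Fin (n + 1)) :
    (Fin.cons a z : Fin (n + 2) → X) ∘ (Fin.succAbove j.succ) = Fin.cons a (z ∘ j.succAbove) := by
  funext k
  refine Fin.cases ?_ (fun m => ?_) k
  · simp [Fin.succ_succAbove_zero]
  · simp [Fin.succ_succAbove_succ]

/-- simplicial contraction via a basepoint -/
lemma cb_cons {X : Type*} {n : ℕ} (c : (Fin (n + 1) → X) → ℝ) (a : X) (z : Fin (n + 1) → X) :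
    cb (fun t : Fin n → X => c (Fin.cons a t)) z = c z - cb c (Fin.cons a z) := by
  have expand : cb c (Fin.cons a z) = c z - cb (fun t : Fin n → X => c (Fin.cons a t)) z := by
    show (∑ i : Fin (n + 2), (-1 : ℝ) ^ (i : ℕ) * c ((Fin.cons a z : Fin (n+2) → X) ∘ i.succAbove)) = _
    rw [Fin.sum_univ_succ]
    rw [cons_comp_succAbove_zero]
    simp only [Fin.val_zero, pow_zero, one_mul, Fin.val_succ]
    have : ∀ j : Fin (n + 1), (-1 : ℝ) ^ ((j : ℕ) + 1) *
        c ((Fin.cons a z : Fin (n+2) → X) ∘ (Fin.succAbove j.succ))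
        = -((-1 : ℝ) ^ (j : ℕ) * c (Fin.cons a (z ∘ j.succAbove))) := by
      intro j
      rw [cons_comp_succAbove_succ, pow_succ]
      ring
    rw [Finset.sum_congr rfl fun j _ => this j, Finset.sum_neg_distrib]
    show c z + -(cb (fun t : Fin n → X => c (Fin.cons a t)) z) = _
    ring
  rw [expand]; ring

end PBA

namespace PBA

section Bicomplex

variable {Y Z Λ G : Type*}

def Bdd3 {p q : ℕ} (F : (Fin p → Y) → (Fin q → Z) → Λ → ℝ) : Prop :=
  ∃ C : ℝ, ∀ y z l, |F y z l| ≤ C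

variable (aY : G → Y → Y) (aZ : G → Z → Z) (aΛ : G → Λ → Λ)

def Inv3 {p q : ℕ} (F : (Fin p → Y) → (Fin q → Z) → Λ → ℝ) : Prop :=
  ∀ (g : G) y z l, F (fun i => aY g (y i)) (fun j => aZ g (z j)) (aΛ g l) = F y z l

noncomputable def dY {p q : ℕ} (F : (Fin p → Y) → (Fin q → Z) → Λ → ℝ) :
    (Fin (p + 1) → Y) → (Fin q → Z) → Λ → ℝ :=
  fun y z l => cb (fun y' => F y' z l) y

noncomputable def dZ {p q : ℕ} (F : (Fin p → Y) → (Fin q → Z) → Λ → ℝ) :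
    (Fin p → Y) → (Fin (q + 1) → Z) → Λ → ℝ :=
  fun y z l => cb (fun z' => F y z' l) z

lemma dY_dY {p q : ℕ} (F : (Fin p → Y) → (Fin q → Z) → Λ → ℝ) : dY (dY F) = 0 := by
  funext y z l
  show cb (cb (fun y' => F y' z l)) y = 0
  rw [cb_cb]
  rfl

lemma dZ_dZ {p q : ℕ} (F : (Fin p → Y) → (Fin q → Z) → Λ → ℝ) : dZ (dZ F) = 0 := by
  funext y z l
  show cb (cb (fun z' => F y z' l)) z = 0
  rw [cb_cb]
  rfl

lemma dY_dZ_comm {p q : ℕ} (F : (Fin p → Y) → (Fin q → Z) → Λ → ℝ) :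
    dY (dZ F) = dZ (dY F) := by
  funext y z l
  simp only [dY, dZ, cb, Finset.mul_sum]
  rw [Finset.sum_comm]
  exact Finset.sum_congr rfl fun i _ => Finset.sum_congr rfl fun j _ => by ring

lemma dY_sub {p q : ℕ} (F F' : (Fin p → Y) → (Fin q → Z) → Λ → ℝ) :
    dY (F - F') = dY F - dY F' := by
  funext y z l
  simp only [dY, cb, Pi.sub_apply, mul_sub]
  rw [Finset.sum_sub_distrib]

lemma dZ_sub {p q : ℕ} (F F' : (Fin p → Y) → (Fin q → Z) → Λ → ℝ) :
    dZ (F - F') = dZ F - dZ F' := by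
  funext y z l
  simp only [dZ, cb, Pi.sub_apply, mul_sub]
  rw [Finset.sum_sub_distrib]

lemma Bdd3_dY {p q : ℕ} {F : (Fin p → Y) → (Fin q → Z) → Λ → ℝ} (h : Bdd3 F) : Bdd3 (dY F) := by
  obtain ⟨C, hC⟩ := h
  refine ⟨(p + 1) * C, fun y z l => ?_⟩
  rw [show dY F y z l = ∑ i : Fin (p + 1), (-1 : ℝ) ^ (i : ℕ) * F (y ∘ i.succAbove) z l from rfl]
  calc |∑ i : Fin (p + 1), (-1 : ℝ) ^ (i : ℕ) * F (y ∘ i.succAbove) z l| ≤ ∑ i : Fin (p + 1), |(-1 : ℝ) ^ (i : ℕ) * F (y ∘ i.succAbove) z l| :=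
        Finset.abs_sum_le_sum_abs _ _
    _ ≤ ∑ _i : Fin (p + 1), C := by
        refine Finset.sum_le_sum fun i _ => ?_
        rw [abs_mul, abs_pow, abs_neg, abs_one, one_pow, one_mul]
        exact hC _ _ _
    _ = (p + 1) * C := by simp [mul_comm]
  
lemma Bdd3_dZ {p q : ℕ} {F : (Fin p → Y) → (Fin q → Z) → Λ → ℝ} (h : Bdd3 F) : Bdd3 (dZ F) := by
  obtain ⟨C, hC⟩ := h
  refine ⟨(q + 1) * C, fun y z l => ?_⟩
  rw [show dZ F y z l = ∑ i : Fin (q + 1), (-1 : ℝ) ^ (i : ℕ) * F y (z ∘ i.succAbove) l from rfl]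
  calc |∑ i : Fin (q + 1), (-1 : ℝ) ^ (i : ℕ) * F y (z ∘ i.succAbove) l| ≤ ∑ i : Fin (q + 1), |(-1 : ℝ) ^ (i : ℕ) * F y (z ∘ i.succAbove) l| :=
        Finset.abs_sum_le_sum_abs _ _
    _ ≤ ∑ _i : Fin (q + 1), C := by
        refine Finset.sum_le_sum fun i _ => ?_
        rw [abs_mul, abs_pow, abs_neg, abs_one, one_pow, one_mul]
        exact hC _ _ _
    _ = (q + 1) * C := by simp [mul_comm]

lemma Bdd3_sub {p q : ℕ} {F F' : (Fin p → Y) → (Fin q → Z) → Λ → ℝ} (h : Bdd3 F) (h' : Bdd3 F') :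
    Bdd3 (F - F') := by
  obtain ⟨C, hC⟩ := h
  obtain ⟨C', hC'⟩ := h'
  exact ⟨C + C', fun y z l => (abs_sub _ _).trans (add_le_add (hC _ _ _) (hC' _ _ _))⟩

lemma Inv3_dY {p q : ℕ} {F : (Fin p → Y) → (Fin q → Z) → Λ → ℝ} (h : Inv3 aY aZ aΛ F) :
    Inv3 aY aZ aΛ (dY F) := by
  intro g y z l
  simp only [dY, cb]
  refine Finset.sum_congr rfl fun i _ => ?_
  congr 1
  exact h g (y ∘ i.succAbove) z l

lemma Inv3_dZ {p q : ℕ} {F : (Fin p → Y) → (Fin q → Z) → Λ → ℝ} (h : Inv3 aY aZ aΛ F) :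
    Inv3 aY aZ aΛ (dZ F) := by
  intro g y z l
  simp only [dZ, cb]
  refine Finset.sum_congr rfl fun i _ => ?_
  congr 1
  exact h g y (z ∘ i.succAbove) l

lemma Inv3_sub {p q : ℕ} {F F' : (Fin p → Y) → (Fin q → Z) → Λ → ℝ} (h : Inv3 aY aZ aΛ F)
    (h' : Inv3 aY aZ aΛ F') : Inv3 aY aZ aΛ (F - F') := by
  intro g y z l
  simp only [Pi.sub_apply]
  rw [h g y z l, h' g y z l]

end Bicomplex

end PBA

namespace PBA

section Chase

variable {Y Z Λ G : Type*} (aY : G → Y → Y) (aZ : G → Z → Z) (aΛ : G → Λ → Λ)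

lemma two_term_faces {X : Type*} (a : X) (y y' : Fin 1 → X) (h : a = y' 0) :
    ((Fin.cons a y : Fin 2 → X) ∘ (0 : Fin 2).succAbove) = y ∧
    ((Fin.cons a y : Fin 2 → X) ∘ (1 : Fin 2).succAbove) = y' := by
  constructor
  · funext k
    have hk : k = 0 := Subsingleton.elim k 0
    subst hk
    have h0 : (0 : Fin 2).succAbove 0 = 1 := by decide
    show (Fin.cons a y : Fin 2 → X) ((0 : Fin 2).succAbove 0) = y 0
    rw [h0]
    rfl
  · funext k
    have hk : k = 0 := Subsingleton.elim k 0
    subst hk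
    have h0 : (1 : Fin 2).succAbove 0 = 0 := by decide
    show (Fin.cons a y : Fin 2 → X) ((1 : Fin 2).succAbove 0) = y' 0
    rw [h0, h]
    rfl

lemma const_of_dY_zero {q : ℕ} {u : (Fin 1 → Y) → (Fin q → Z) → Λ → ℝ}
    (h : dY u = 0) (y y' : Fin 1 → Y) (z : Fin q → Z) (l : Λ) : u y z l = u y' z l := by
  have h2 := congrFun (congrFun (congrFun h (Fin.cons (y' 0) y)) z) l
  rw [show dY u (Fin.cons (y' 0) y) z l
      = ∑ i : Fin 2, (-1:ℝ)^(i:ℕ) * u ((Fin.cons (y' 0) y : Fin 2 → Y) ∘ i.succAbove) z l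
      from rfl] at h2
  rw [Fin.sum_univ_two] at h2
  obtain ⟨e0, e1⟩ := two_term_faces (y' 0) y y' rfl
  rw [e0, e1] at h2
  simp at h2
  linarith [h2]

lemma const_of_dZ_zero {p : ℕ} {w : (Fin p → Y) → (Fin 1 → Z) → Λ → ℝ}
    (h : dZ w = 0) (y : Fin p → Y) (z z' : Fin 1 → Z) (l : Λ) : w y z l = w y z' l := by
  have h2 := congrFun (congrFun (congrFun h y) (Fin.cons (z' 0) z)) l
  rw [show dZ w y (Fin.cons (z' 0) z) l
      = ∑ i : Fin 2, (-1:ℝ)^(i:ℕ) * w y ((Fin.cons (z' 0) z : Fin 2 → Z) ∘ i.succAbove) l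
      from rfl] at h2
  rw [Fin.sum_univ_two] at h2
  obtain ⟨e0, e1⟩ := two_term_faces (z' 0) z z' rfl
  rw [e0, e1] at h2
  simp at h2
  linarith [h2]

lemma dY_yconst {q : ℕ} (t : (Fin q → Z) → Λ → ℝ) :
    dY (fun (_ : Fin 1 → Y) z l => t z l) = 0 := by
  funext y z l
  rw [show dY (fun (_ : Fin 1 → Y) z l => t z l) y z l
      = ∑ i : Fin 2, (-1:ℝ)^(i:ℕ) * t z l from rfl]
  rw [Fin.sum_univ_two]
  simp

lemma dZ_zconst {p q : ℕ} (t : (Fin p → Y) → Λ → ℝ) :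
    dZ (fun y (_ : Fin (q+1) → Z) l => t y l) = fun y (_ : Fin (q+2) → Z) l =>
      (∑ i : Fin (q + 2), (-1:ℝ)^(i:ℕ)) * t y l := by
  funext y z l
  rw [show dZ (fun y (_ : Fin (q+1) → Z) l => t y l) y z l
      = ∑ i : Fin (q+2), (-1:ℝ)^(i:ℕ) * t y l from rfl]
  rw [← Finset.sum_mul]

theorem chaseS [Nonempty Y]
    (Hrow : ∀ p q (f : (Fin (p + 2) → Y) → (Fin (q + 1) → Z) → Λ → ℝ),
      Inv3 aY aZ aΛ f → Bdd3 f → dY f = 0 →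
      ∃ g : (Fin (p + 1) → Y) → (Fin (q + 1) → Z) → Λ → ℝ,
        Inv3 aY aZ aΛ g ∧ Bdd3 g ∧ dY g = f)
    (Hcol : ∀ p q (f : (Fin (p + 1) → Y) → (Fin (q + 2) → Z) → Λ → ℝ),
      Inv3 aY aZ aΛ f → Bdd3 f → dZ f = 0 →
      ∃ g : (Fin (p + 1) → Y) → (Fin (q + 1) → Z) → Λ → ℝ,
        Inv3 aY aZ aΛ g ∧ Bdd3 g ∧ dZ g = f)
    (Hedge : ∀ q (v : (Fin 0 → Y) → (Fin (q + 2) → Z) → Λ → ℝ),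
      Inv3 aY aZ aΛ v → Bdd3 v → dZ v = 0 →
      ∃ v' : (Fin 0 → Y) → (Fin (q + 1) → Z) → Λ → ℝ,
        Inv3 aY aZ aΛ v' ∧ Bdd3 v' ∧ dZ v' = v) :
    ∀ p q (u : (Fin (p + 2) → Y) → (Fin (q + 1) → Z) → Λ → ℝ),
      Inv3 aY aZ aΛ u → Bdd3 u → dY u = 0 → dZ u = 0 →
      ∃ w : (Fin (p + 1) → Y) → (Fin (q + 1) → Z) → Λ → ℝ,
        Inv3 aY aZ aΛ w ∧ Bdd3 w ∧ dY w = u ∧ dZ w = 0 := by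
  intro p
  induction p with
  | zero =>
    intro q u hu_inv hu_bdd hu_dY hu_dZ
    obtain ⟨w₀, hw₀_inv, hw₀_bdd, hw₀_dY⟩ := Hrow 0 q u hu_inv hu_bdd hu_dY
    set u' := dZ w₀ with hu'
    have hu'_inv : Inv3 aY aZ aΛ u' := Inv3_dZ aY aZ aΛ hw₀_inv
    have hu'_bdd : Bdd3 u' := Bdd3_dZ hw₀_bdd
    have hu'_dY : dY u' = 0 := by
      rw [hu', dY_dZ_comm, hw₀_dY, hu_dZ]
    have hu'_dZ : dZ u' = 0 := dZ_dZ w₀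
    obtain ⟨y₀⟩ := (inferInstance : Nonempty Y)
    set v : (Fin 0 → Y) → (Fin (q + 2) → Z) → Λ → ℝ := fun _ z l => u' (fun _ => y₀) z l with hv
    have hv_inv : Inv3 aY aZ aΛ v := by
      intro g y z l
      show u' (fun _ => y₀) (fun j => aZ g (z j)) (aΛ g l) = u' (fun _ => y₀) z l
      rw [const_of_dY_zero hu'_dY (fun _ => y₀) (fun _ => aY g y₀) (fun j => aZ g (z j)) (aΛ g l)]
      exact hu'_inv g (fun _ => y₀) z l
    have hv_bdd : Bdd3 v := by
      obtain ⟨C, hC⟩ := hu'_bdd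
      exact ⟨C, fun y z l => hC _ _ _⟩
    have hv_dZ : dZ v = 0 := by
      funext y z l
      show dZ u' (fun _ => y₀) z l = 0
      rw [hu'_dZ]; rfl
    obtain ⟨v', hv'_inv, hv'_bdd, hv'_dZ⟩ := Hedge q v hv_inv hv_bdd hv_dZ
    set s : (Fin 1 → Y) → (Fin (q + 1) → Z) → Λ → ℝ := fun _ z l => v' Fin.elim0 z l with hs
    refine ⟨w₀ - s, ?_, ?_, ?_, ?_⟩
    · refine Inv3_sub aY aZ aΛ hw₀_inv ?_
      intro g y z l
      show v' Fin.elim0 (fun j => aZ g (z j)) (aΛ g l) = v' Fin.elim0 z l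
      have := hv'_inv g Fin.elim0 z l
      rwa [Subsingleton.elim (fun i => aY g (Fin.elim0 i) : Fin 0 → Y) Fin.elim0] at this
    · refine Bdd3_sub hw₀_bdd ?_
      obtain ⟨C, hC⟩ := hv'_bdd
      exact ⟨C, fun y z l => hC _ _ _⟩
    · rw [dY_sub, hw₀_dY, dY_yconst (fun z l => v' Fin.elim0 z l)]
      funext y z l
      simp
    · rw [dZ_sub]
      funext y z l
      have h1 : dZ s y z l = v Fin.elim0 z l := by
        show dZ v' Fin.elim0 z l = v Fin.elim0 z l
        rw [hv'_dZ]
      have h2 : v Fin.elim0 z l = u' y z l := by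
        show u' (fun _ => y₀) z l = u' y z l
        exact const_of_dY_zero hu'_dY (fun _ => y₀) y z l
      show dZ w₀ y z l - dZ s y z l = 0
      rw [h1, h2]
      ring
  | succ p ih =>
    intro q u hu_inv hu_bdd hu_dY hu_dZ
    obtain ⟨w₀, hw₀_inv, hw₀_bdd, hw₀_dY⟩ := Hrow (p + 1) q u hu_inv hu_bdd hu_dY
    set u' := dZ w₀ with hu'
    have hu'_inv : Inv3 aY aZ aΛ u' := Inv3_dZ aY aZ aΛ hw₀_inv
    have hu'_bdd : Bdd3 u' := Bdd3_dZ hw₀_bdd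
    have hu'_dY : dY u' = 0 := by rw [hu', dY_dZ_comm, hw₀_dY, hu_dZ]
    have hu'_dZ : dZ u' = 0 := dZ_dZ w₀
    obtain ⟨w₁, hw₁_inv, hw₁_bdd, hw₁_dY, hw₁_dZ⟩ := ih (q + 1) u' hu'_inv hu'_bdd hu'_dY hu'_dZ
    obtain ⟨s, hs_inv, hs_bdd, hs_dZ⟩ := Hcol p q w₁ hw₁_inv hw₁_bdd hw₁_dZ
    refine ⟨w₀ - dY s, Inv3_sub aY aZ aΛ hw₀_inv (Inv3_dY aY aZ aΛ hs_inv),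
      Bdd3_sub hw₀_bdd (Bdd3_dY hs_bdd), ?_, ?_⟩
    · rw [dY_sub, hw₀_dY, dY_dY]
      funext y z l
      simp
    · rw [dZ_sub, ← dY_dZ_comm, hs_dZ, hw₁_dY]
      funext y z l
      simp [hu']

theorem chaseMain [Nonempty Y] [Nonempty Z]
    (Hrow : ∀ p q (f : (Fin (p + 2) → Y) → (Fin (q + 1) → Z) → Λ → ℝ),
      Inv3 aY aZ aΛ f → Bdd3 f → dY f = 0 →
      ∃ g : (Fin (p + 1) → Y) → (Fin (q + 1) → Z) → Λ → ℝ,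
        Inv3 aY aZ aΛ g ∧ Bdd3 g ∧ dY g = f)
    (Hcol : ∀ p q (f : (Fin (p + 1) → Y) → (Fin (q + 2) → Z) → Λ → ℝ),
      Inv3 aY aZ aΛ f → Bdd3 f → dZ f = 0 →
      ∃ g : (Fin (p + 1) → Y) → (Fin (q + 1) → Z) → Λ → ℝ,
        Inv3 aY aZ aΛ g ∧ Bdd3 g ∧ dZ g = f)
    (Hedge : ∀ q (v : (Fin 0 → Y) → (Fin (q + 2) → Z) → Λ → ℝ),
      Inv3 aY aZ aΛ v → Bdd3 v → dZ v = 0 →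
      ∃ v' : (Fin 0 → Y) → (Fin (q + 1) → Z) → Λ → ℝ,
        Inv3 aY aZ aΛ v' ∧ Bdd3 v' ∧ dZ v' = v) :
    ∀ p (c : (Fin (p + 2) → Y) → (Fin 0 → Z) → Λ → ℝ),
      Inv3 aY aZ aΛ c → Bdd3 c → dY c = 0 →
      ∃ b : (Fin (p + 1) → Y) → (Fin 0 → Z) → Λ → ℝ,
        Inv3 aY aZ aΛ b ∧ Bdd3 b ∧ dY b = c := by
  intro p c hc_inv hc_bdd hc_dY
  obtain ⟨z₀⟩ := (inferInstance : Nonempty Z)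
  set ec : (Fin (p + 2) → Y) → (Fin 1 → Z) → Λ → ℝ := fun y _ l => c y Fin.elim0 l with hec
  have hec_inv : Inv3 aY aZ aΛ ec := by
    intro g y z l
    show c (fun i => aY g (y i)) Fin.elim0 (aΛ g l) = c y Fin.elim0 l
    have := hc_inv g y Fin.elim0 l
    rwa [Subsingleton.elim (fun j => aZ g (Fin.elim0 j) : Fin 0 → Z) Fin.elim0] at this
  have hec_bdd : Bdd3 ec := by
    obtain ⟨C, hC⟩ := hc_bdd
    exact ⟨C, fun y z l => hC _ _ _⟩
  have hec_dY : dY ec = 0 := by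
    funext y z l
    show dY c y Fin.elim0 l = 0
    rw [hc_dY]; rfl
  have hec_dZ : dZ ec = 0 := by
    funext y z l
    rw [show dZ ec y z l = ∑ i : Fin 2, (-1:ℝ)^(i:ℕ) * c y Fin.elim0 l from rfl,
      Fin.sum_univ_two]
    simp
  obtain ⟨w, hw_inv, hw_bdd, hw_dY, hw_dZ⟩ :=
    chaseS aY aZ aΛ Hrow Hcol Hedge p 0 ec hec_inv hec_bdd hec_dY hec_dZ
  refine ⟨fun y _ l => w y (fun _ => z₀) l, ?_, ?_, ?_⟩
  · intro g y z l
    show w (fun i => aY g (y i)) (fun _ => z₀) (aΛ g l) = w y (fun _ => z₀) l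
    rw [const_of_dZ_zero hw_dZ (fun i => aY g (y i)) (fun _ => z₀) (fun _ => aZ g z₀) (aΛ g l)]
    exact hw_inv g y (fun _ => z₀) l
  · obtain ⟨C, hC⟩ := hw_bdd
    exact ⟨C, fun y z l => hC _ _ _⟩
  · funext y z l
    show dY w y (fun _ => z₀) l = c y z l
    rw [hw_dY]
    show c y Fin.elim0 l = c y z l
    rw [Subsingleton.elim (Fin.elim0 : Fin 0 → Z) z]

end Chase

end PBA

namespace PBA

section Contr

variable {Y Z Λ G : Type*} (aY : G → Y → Y) (aZ : G → Z → Z) (aΛ : G → Λ → Λ)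

theorem contrCol (u : Y → Z) (hu : ∀ g y, aZ g (u y) = u (aY g y))
    (p q : ℕ) (f : (Fin (p + 1) → Y) → (Fin (q + 2) → Z) → Λ → ℝ)
    (hf_inv : Inv3 aY aZ aΛ f) (hf_bdd : Bdd3 f) (hf_dZ : dZ f = 0) :
    ∃ g : (Fin (p + 1) → Y) → (Fin (q + 1) → Z) → Λ → ℝ,
      Inv3 aY aZ aΛ g ∧ Bdd3 g ∧ dZ g = f := by
  refine ⟨fun y z l => f y (Fin.cons (u (y 0)) z) l, ?_, ?_, ?_⟩
  · intro g y z l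
    show f (fun i => aY g (y i)) (Fin.cons (u (aY g (y 0))) (fun j => aZ g (z j))) (aΛ g l)
      = f y (Fin.cons (u (y 0)) z) l
    have hcons : (Fin.cons (u (aY g (y 0))) (fun j => aZ g (z j)) : Fin (q+2) → Z)
        = fun j => aZ g ((Fin.cons (u (y 0)) z : Fin (q+2) → Z) j) := by
      funext j
      refine Fin.cases ?_ (fun m => ?_) j
      · simp [hu]
      · simp
    rw [hcons]
    exact hf_inv g y (Fin.cons (u (y 0)) z) l
  · obtain ⟨C, hC⟩ := hf_bdd
    exact ⟨C, fun y z l => hC _ _ _⟩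
  · funext y z l
    show cb (fun z' => f y (Fin.cons (u (y 0)) z') l) z = f y z l
    rw [cb_cons (fun z'' => f y z'' l) (u (y 0)) z]
    have : cb (fun z'' => f y z'' l) (Fin.cons (u (y 0)) z) = dZ f y (Fin.cons (u (y 0)) z) l := rfl
    rw [this, hf_dZ]
    show f y z l - 0 = f y z l
    ring

theorem contrRow (jm : Z → Λ → Y) (hj : ∀ g z l, aY g (jm z l) = jm (aZ g z) (aΛ g l))
    (p q : ℕ) (f : (Fin (p + 2) → Y) → (Fin (q + 1) → Z) → Λ → ℝ)
    (hf_inv : Inv3 aY aZ aΛ f) (hf_bdd : Bdd3 f) (hf_dY : dY f = 0) :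
    ∃ g : (Fin (p + 1) → Y) → (Fin (q + 1) → Z) → Λ → ℝ,
      Inv3 aY aZ aΛ g ∧ Bdd3 g ∧ dY g = f := by
  refine ⟨fun y z l => f (Fin.cons (jm (z 0) l) y) z l, ?_, ?_, ?_⟩
  · intro g y z l
    show f (Fin.cons (jm (aZ g (z 0)) (aΛ g l)) (fun i => aY g (y i))) (fun j => aZ g (z j)) (aΛ g l)
      = f (Fin.cons (jm (z 0) l) y) z l
    have hcons : (Fin.cons (jm (aZ g (z 0)) (aΛ g l)) (fun i => aY g (y i)) : Fin (p+2) → Y)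
        = fun i => aY g ((Fin.cons (jm (z 0) l) y : Fin (p+2) → Y) i) := by
      funext i
      refine Fin.cases ?_ (fun m => ?_) i
      · simp [hj]
      · simp
    rw [hcons]
    exact hf_inv g (Fin.cons (jm (z 0) l) y) z l
  · obtain ⟨C, hC⟩ := hf_bdd
    exact ⟨C, fun y z l => hC _ _ _⟩
  · funext y z l
    show cb (fun y' => f (Fin.cons (jm (z 0) l) y') z l) y = f y z l
    rw [cb_cons (fun y'' => f y'' z l) (jm (z 0) l) y]
    have : cb (fun y'' => f y'' z l) (Fin.cons (jm (z 0) l) y) = dY f (Fin.cons (jm (z 0) l) y) z l := rfl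
    rw [this, hf_dY]
    show f y z l - 0 = f y z l
    ring

end Contr

end PBA

namespace PBA

lemma gcob_eq_cb {G : Type*} [Group G] {n : ℕ} (c : (Fin n → G) → ℝ) :
    gcoboundary c = cb c := rfl

lemma IsInvCochain_cb {G : Type*} [Group G] {n : ℕ} {c : (Fin n → G) → ℝ}
    (h : IsInvCochain c) : IsInvCochain (cb c) := by
  intro g x
  show (∑ i : Fin (n + 1), (-1:ℝ)^(i:ℕ) * c ((fun k => g * x k) ∘ i.succAbove)) = _
  refine Finset.sum_congr rfl fun i _ => ?_
  congr 1
  exact h g (x ∘ i.succAbove)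

lemma cb_bound {X : Type*} {n : ℕ} {c : (Fin n → X) → ℝ} {C : ℝ}
    (h : ∀ x, |c x| ≤ C) (x : Fin (n + 1) → X) : |cb c x| ≤ (n + 1) * C := by
  calc |∑ i : Fin (n + 1), (-1 : ℝ) ^ (i : ℕ) * c (x ∘ i.succAbove)|
      ≤ ∑ i : Fin (n + 1), |(-1 : ℝ) ^ (i : ℕ) * c (x ∘ i.succAbove)| :=
        Finset.abs_sum_le_sum_abs _ _
    _ ≤ ∑ _i : Fin (n + 1), C := by
        refine Finset.sum_le_sum fun i _ => ?_
        rw [abs_mul, abs_pow, abs_neg, abs_one, one_pow, one_mul]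
        exact h _
    _ = (n + 1) * C := by simp [mul_comm]

lemma cb_addf {X : Type*} {n : ℕ} (c c' : (Fin n → X) → ℝ) :
    cb (c + c') = cb c + cb c' := by
  funext x
  show (∑ i : Fin (n+1), (-1:ℝ)^(i:ℕ) * (c (x ∘ i.succAbove) + c' (x ∘ i.succAbove))) = _
  rw [show (cb c + cb c') x = cb c x + cb c' x from rfl]
  simp only [mul_add]
  rw [Finset.sum_add_distrib]
  rfl

lemma cb_smulf {X : Type*} {n : ℕ} (r : ℝ) (c : (Fin n → X) → ℝ) :
    cb (r • c) = r • cb c := by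
  funext x
  show (∑ i : Fin (n+1), (-1:ℝ)^(i:ℕ) * (r * c (x ∘ i.succAbove))) = r * ∑ i : Fin (n+1), _
  rw [Finset.mul_sum]
  exact Finset.sum_congr rfl fun i _ => by ring

-- tuples with the discrete topology
def DTup (G : Type*) (n : ℕ) : Type _ := Fin n → G
instance (G : Type*) (n : ℕ) : TopologicalSpace (DTup G n) := ⊥
instance (G : Type*) (n : ℕ) : DiscreteTopology (DTup G n) := ⟨rfl⟩

variable (G : Type*) [Group G]

/-- invariant bounded cochains as a submodule of bounded functions -/
def SInv (n : ℕ) : Submodule ℝ (BoundedContinuousFunction (DTup G n) ℝ) where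
  carrier := {f | IsInvCochain (G := G) (n := n) (⇑f)}
  add_mem' := fun {f} {f'} hf hf' g x => by
    simp only [BoundedContinuousFunction.coe_add, Pi.add_apply]
    exact congrArg₂ (· + ·) (hf g x) (hf' g x)
  zero_mem' := fun g x => rfl
  smul_mem' := fun r {f} hf g x => by
    simp only [BoundedContinuousFunction.coe_smul, Pi.smul_apply]
    rw [hf g x]

/-- invariant bounded cocycles -/
def SZc (n : ℕ) : Submodule ℝ (BoundedContinuousFunction (DTup G (n+1)) ℝ) where
  carrier := {f | IsInvCochain (G := G) (n := n+1) (⇑f) ∧ cb (⇑f) = 0}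
  add_mem' := fun {f} {f'} hf hf' => by
    refine ⟨fun g x => ?_, ?_⟩
    · simp only [BoundedContinuousFunction.coe_add, Pi.add_apply]
      exact congrArg₂ (· + ·) (hf.1 g x) (hf'.1 g x)
    · have hc : (⇑(f + f') : (Fin (n+1) → G) → ℝ) = (⇑f) + (⇑f') := rfl
      rw [hc]
      have e := cb_addf (X := G) (n := n+1) (⇑f) (⇑f')
      rw [hf.2, hf'.2, add_zero] at e
      exact e
  zero_mem' := ⟨fun g x => rfl, by
    funext x
    show (∑ i : Fin (n+2), (-1:ℝ)^(i:ℕ) * (0:ℝ)) = 0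
    simp⟩
  smul_mem' := fun r {f} hf => by
    refine ⟨fun g x => ?_, ?_⟩
    · simp only [BoundedContinuousFunction.coe_smul, Pi.smul_apply]
      rw [hf.1 g x]
    · have hc : (⇑(r • f) : (Fin (n+1) → G) → ℝ) = r • (⇑f) := rfl
      rw [hc]
      have e := cb_smulf (X := G) (n := n+1) r (⇑f)
      rw [hf.2, smul_zero] at e
      exact e

instance SInv_complete (n : ℕ) : CompleteSpace (SInv G n) := by
  refine IsClosed.completeSpace_coe (hs := ?_)
  have : (SInv G n : Set (BoundedContinuousFunction (DTup G n) ℝ)) =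
      ⋂ (g : G), ⋂ (x : Fin n → G),
        {f : BoundedContinuousFunction (DTup G n) ℝ | f (fun i => g * x i) = f x} := by
    ext f
    simp only [Set.mem_iInter, Set.mem_setOf_eq]
    exact ⟨fun h g x => h g x, fun h g x => h g x⟩
  rw [this]
  exact isClosed_iInter fun g => isClosed_iInter fun x =>
    isClosed_eq (continuous_eval_const _)
      (continuous_eval_const _)

instance SZc_complete (n : ℕ) : CompleteSpace (SZc G n) := by
  refine IsClosed.completeSpace_coe (hs := ?_)
  have : (SZc G n : Set (BoundedContinuousFunction (DTup G (n+1)) ℝ)) =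
      (⋂ (g : G), ⋂ (x : Fin (n+1) → G),
        {f : BoundedContinuousFunction (DTup G (n+1)) ℝ | f (fun i => g * x i) = f x}) ∩
      (⋂ (x : Fin (n+2) → G),
        {f : BoundedContinuousFunction (DTup G (n+1)) ℝ |
          (∑ i : Fin (n+2), (-1:ℝ)^(i:ℕ) * f (x ∘ i.succAbove)) = 0}) := by
    ext f
    simp only [Set.mem_inter_iff, Set.mem_iInter, Set.mem_setOf_eq]
    constructor
    · rintro ⟨h1, h2⟩
      exact ⟨fun g x => h1 g x, fun x => congrFun h2 x⟩
    · rintro ⟨h1, h2⟩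
      exact ⟨fun g x => h1 g x, funext fun x => h2 x⟩
  rw [this]
  refine IsClosed.inter
    (isClosed_iInter fun g => isClosed_iInter fun x =>
      isClosed_eq (continuous_eval_const _)
        (continuous_eval_const _))
    (isClosed_iInter fun x => isClosed_eq ?_ continuous_const)
  exact continuous_finset_sum _ fun i _ =>
    Continuous.mul continuous_const (continuous_eval_const _)

/-- the coboundary as a linear map between the Banach spaces -/
noncomputable def mkB {G : Type*} {n : ℕ} (f : (Fin n → G) → ℝ) (C : ℝ)
    (hC : ∀ x, |f x| ≤ C) : BoundedContinuousFunction (DTup G n) ℝ :=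
  BoundedContinuousFunction.ofNormedAddCommGroup (α := DTup G n) f continuous_bot C
    (fun x => by rw [Real.norm_eq_abs]; exact hC x)

@[simp] lemma mkB_coe {G : Type*} {n : ℕ} (f : (Fin n → G) → ℝ) (C : ℝ)
    (hC : ∀ x, |f x| ≤ C) : ⇑(mkB f C hC) = f := rfl

lemma mkB_norm_le {G : Type*} {n : ℕ} (f : (Fin n → G) → ℝ) (C : ℝ) (hC0 : 0 ≤ C)
    (hC : ∀ x, |f x| ≤ C) : ‖mkB f C hC‖ ≤ C :=
  BoundedContinuousFunction.norm_ofNormedAddCommGroup_le _ hC0 _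

lemma coe_abs_le_norm {G : Type*} {n : ℕ} (f : BoundedContinuousFunction (DTup G n) ℝ)
    (t : Fin n → G) : |f t| ≤ ‖f‖ := by
  rw [← Real.norm_eq_abs]
  exact BoundedContinuousFunction.norm_coe_le_norm f t

/-- the coboundary as a linear map between the Banach spaces -/
noncomputable def dmap (n : ℕ) : SInv G n →ₗ[ℝ] SZc G n where
  toFun := fun f =>
    ⟨mkB (cb (⇑(f : BoundedContinuousFunction (DTup G n) ℝ)))
      (((n : ℝ) + 1) * ‖(f : BoundedContinuousFunction (DTup G n) ℝ)‖) (fun x => by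
        have := cb_bound (C := ‖(f : BoundedContinuousFunction (DTup G n) ℝ)‖) (fun t =>
          coe_abs_le_norm (f : BoundedContinuousFunction (DTup G n) ℝ) t) x
        exact_mod_cast this),
    ⟨IsInvCochain_cb f.2, by
      rw [mkB_coe]; exact cb_cb _⟩⟩
  map_add' := fun f f' => by
    apply Subtype.ext
    apply BoundedContinuousFunction.ext
    intro x
    show cb (⇑((f : BoundedContinuousFunction (DTup G n) ℝ) + ↑f')) x = _
    have hc : (⇑((f : BoundedContinuousFunction (DTup G n) ℝ) + ↑f') : (Fin n → G) → ℝ)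
        = (⇑(f : BoundedContinuousFunction (DTup G n) ℝ)) + (⇑(f' : BoundedContinuousFunction (DTup G n) ℝ)) := rfl
    rw [hc]
    exact congrFun (cb_addf (X := G) (n := n) (⇑(f : BoundedContinuousFunction (DTup G n) ℝ))
      (⇑(f' : BoundedContinuousFunction (DTup G n) ℝ))) x
  map_smul' := fun r f => by
    apply Subtype.ext
    apply BoundedContinuousFunction.ext
    intro x
    show cb (⇑(r • (f : BoundedContinuousFunction (DTup G n) ℝ))) x = _
    have hc : (⇑(r • (f : BoundedContinuousFunction (DTup G n) ℝ)) : (Fin n → G) → ℝ)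
        = r • (⇑(f : BoundedContinuousFunction (DTup G n) ℝ)) := rfl
    rw [hc]
    exact congrFun (cb_smulf (X := G) (n := n) r (⇑(f : BoundedContinuousFunction (DTup G n) ℝ))) x

lemma dmap_bound (n : ℕ) : ∀ f : SInv G n, ‖dmap G n f‖ ≤ ((n : ℝ) + 1) * ‖f‖ := by
  intro f
  show ‖((dmap G n f : SZc G n) : BoundedContinuousFunction (DTup G (n+1)) ℝ)‖
    ≤ ((n : ℝ) + 1) * ‖f‖
  rw [BoundedContinuousFunction.norm_le (by positivity)]
  intro x
  show ‖cb (⇑(f : BoundedContinuousFunction (DTup G n) ℝ)) x‖ ≤ ((n : ℝ) + 1) * ‖f‖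
  rw [Real.norm_eq_abs]
  have := cb_bound (C := ‖(f : BoundedContinuousFunction (DTup G n) ℝ)‖)
    (fun t => coe_abs_le_norm (f : BoundedContinuousFunction (DTup G n) ℝ) t) x
  exact_mod_cast this

theorem omt_aux {E F : Type*} [NormedAddCommGroup E] [NormedSpace ℝ E]
    [NormedAddCommGroup F] [NormedSpace ℝ F] [CompleteSpace E] [CompleteSpace F]
    (f : E →ₗ[ℝ] F) (C : ℝ) (hC : ∀ x, ‖f x‖ ≤ C * ‖x‖) (hs : Function.Surjective f) :
    ∃ K > 0, ∀ y, ∃ x, f x = y ∧ ‖x‖ ≤ K * ‖y‖ := by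
  let T := LinearMap.mkContinuous f C hC
  have hTs : Function.Surjective T := hs
  obtain ⟨K, hKpos, hK⟩ := ContinuousLinearMap.exists_preimage_norm_le T hTs
  exact ⟨K, hKpos, fun y => hK y⟩

theorem uniform (h : ∀ q : ℕ, 0 < q → HbVanishAt G q) (q : ℕ) (hq : 0 < q) :
    ∃ K : ℝ, 0 ≤ K ∧ ∀ (M : ℝ) (c : (Fin (q + 1) → G) → ℝ), IsInvCochain c →
      (∀ x, |c x| ≤ M) → gcoboundary c = 0 →
      ∃ b : (Fin q → G) → ℝ, IsInvCochain b ∧ gcoboundary b = c ∧ ∀ x, |b x| ≤ K * M := by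
  have hsurj : Function.Surjective (dmap G q) := by
    intro y
    have hy_inv : IsInvCochain (⇑(y : BoundedContinuousFunction (DTup G (q+1)) ℝ)) := y.2.1
    have hy_cb : cb (⇑(y : BoundedContinuousFunction (DTup G (q+1)) ℝ)) = 0 := y.2.2
    have hy_bdd : IsBddFun (⇑(y : BoundedContinuousFunction (DTup G (q+1)) ℝ)) :=
      ⟨‖(y : BoundedContinuousFunction (DTup G (q+1)) ℝ)‖, fun x =>
        coe_abs_le_norm (y : BoundedContinuousFunction (DTup G (q+1)) ℝ) x⟩
    obtain ⟨b, hb_inv, hb_bdd, hb_cb⟩ := h q hq _ hy_inv hy_bdd (by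
      exact hy_cb)
    obtain ⟨Cb, hCb⟩ := hb_bdd
    refine ⟨⟨mkB b Cb hCb, hb_inv⟩, ?_⟩
    apply Subtype.ext
    apply BoundedContinuousFunction.ext
    intro x
    show cb b x = (y : BoundedContinuousFunction (DTup G (q+1)) ℝ) x
    rw [← gcob_eq_cb, hb_cb]
  obtain ⟨K, hKpos, hK⟩ := omt_aux (E := SInv G q) (F := SZc G q) (dmap G q) ((q : ℝ) + 1) (dmap_bound G q) hsurj
  refine ⟨K, le_of_lt hKpos, ?_⟩
  intro M c hc_inv hc_bdd hc_cb
  have hM : 0 ≤ M := le_trans (abs_nonneg _) (hc_bdd (fun _ => 1))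
  have hy_mem : mkB c M hc_bdd ∈ SZc G q :=
    ⟨hc_inv, by rw [mkB_coe, ← gcob_eq_cb, hc_cb]⟩
  obtain ⟨x, hx_eq, hx_norm⟩ := hK ⟨_, hy_mem⟩
  refine ⟨⇑(x : BoundedContinuousFunction (DTup G q) ℝ), x.2, ?_, ?_⟩
  · have h1 := congrArg
      (fun v : SZc G q => (⇑(v : BoundedContinuousFunction (DTup G (q+1)) ℝ)
        : (Fin (q+1) → G) → ℝ)) hx_eq
    exact h1
  · intro t
    have h1 : |(x : BoundedContinuousFunction (DTup G q) ℝ) t| ≤ ‖(x : BoundedContinuousFunction (DTup G q) ℝ)‖ :=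
      coe_abs_le_norm (x : BoundedContinuousFunction (DTup G q) ℝ) t
    have h2 : ‖(⟨_, hy_mem⟩ : SZc G q)‖ ≤ M := by
      show ‖mkB c M hc_bdd‖ ≤ M
      exact mkB_norm_le c M hM hc_bdd
    calc |(x : BoundedContinuousFunction (DTup G q) ℝ) t| ≤ ‖x‖ := h1
      _ ≤ K * ‖(⟨_, hy_mem⟩ : SZc G q)‖ := hx_norm
      _ ≤ K * M := by nlinarith

end PBA

namespace PBA

open scoped Classical in
noncomputable def selPrim (G : Type*) [Group G] (q : ℕ) (K M : ℝ)
    (c : (Fin (q + 1) → G) → ℝ) : (Fin q → G) → ℝ :=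
  if h : ∃ b : (Fin q → G) → ℝ, IsInvCochain b ∧ gcoboundary b = c ∧ ∀ x, |b x| ≤ K * M then
    h.choose else 0

lemma selPrim_spec {G : Type*} [Group G] {q : ℕ} {K M : ℝ} {c : (Fin (q + 1) → G) → ℝ}
    (h : ∃ b : (Fin q → G) → ℝ, IsInvCochain b ∧ gcoboundary b = c ∧ ∀ x, |b x| ≤ K * M) :
    IsInvCochain (selPrim G q K M c) ∧ gcoboundary (selPrim G q K M c) = c ∧
      ∀ x, |selPrim G q K M c x| ≤ K * M := by
  rw [selPrim, dif_pos h]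
  exact h.choose_spec

section Binary

variable (A B : Type*) [Group A] [Group B]

/-- actions for the row bicomplex -/
def aYr : A × B → A × B → A × B := fun g y => g * y
def aZr : A × B → A → A := fun g a => g.1 * a
def aLr (Q : ℕ) : A × B → (Fin (Q + 1) → B) → (Fin (Q + 1) → B) := fun g l k => g.2 * l k

theorem row_exact (hA : ∀ q : ℕ, 0 < q → HbVanishAt A q) (Q : ℕ) :
    ∀ p (c : (Fin (p + 2) → A × B) → (Fin 0 → A) → (Fin (Q + 1) → B) → ℝ),
      Inv3 (aYr A B) (aZr A B) (aLr A B Q) c → Bdd3 c → dY c = 0 →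
      ∃ b : (Fin (p + 1) → A × B) → (Fin 0 → A) → (Fin (Q + 1) → B) → ℝ,
        Inv3 (aYr A B) (aZr A B) (aLr A B Q) b ∧ Bdd3 b ∧ dY b = c := by
  refine chaseMain (aYr A B) (aZr A B) (aLr A B Q) ?_ ?_ ?_
  · -- rows: contraction via jm
    refine contrRow (aYr A B) (aZr A B) (aLr A B Q) (fun a l => (a, l 0)) ?_
    intro g z l
    show g * (z, l 0) = (g.1 * z, g.2 * l 0)
    rfl
  · -- columns: contraction via first projection
    refine contrCol (aYr A B) (aZr A B) (aLr A B Q) Prod.fst ?_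
    intro g y
    show g.1 * y.1 = (g * y).1
    rfl
  · -- edge: uniformized vanishing for A, with parameters
    intro q v hv_inv hv_bdd hv_dZ
    obtain ⟨C, hC⟩ := hv_bdd
    obtain ⟨K, hK0, hK⟩ := uniform A hA (q + 1) (Nat.succ_pos q)
    have hex : ∀ l : Fin (Q + 1) → B,
        ∃ b : (Fin (q + 1) → A) → ℝ, IsInvCochain b ∧
          gcoboundary b = (fun a => v Fin.elim0 a l) ∧ ∀ x, |b x| ≤ K * C := by
      intro l
      refine hK C (fun a => v Fin.elim0 a l) ?_ (fun a => hC _ _ _) ?_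
      · intro α a
        have h1 := hv_inv (α, 1) Fin.elim0 a l
        rw [Subsingleton.elim (fun i => aYr A B (α, 1) (Fin.elim0 i) : Fin 0 → A × B)
          Fin.elim0] at h1
        have h2 : (fun k => aLr A B Q (α, 1) l k) = l := by
          funext k
          show (1 : B) * l k = l k
          rw [one_mul]
        show v Fin.elim0 (fun i => α * a i) l = v Fin.elim0 a l
        calc v Fin.elim0 (fun i => α * a i) l
            = v Fin.elim0 (fun j => aZr A B (α, 1) (a j)) (fun k => aLr A B Q (α, 1) l k) := by
              rw [h2]
              rfl
          _ = v Fin.elim0 a l := h1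
      · funext z
        have := congrFun (congrFun (congrFun hv_dZ Fin.elim0) z) l
        exact this
    refine ⟨fun _ z l => selPrim A (q + 1) K C (fun a => v Fin.elim0 a l) z, ?_, ?_, ?_⟩
    · intro g y z l
      have hcl : (fun a => v Fin.elim0 a (fun k => aLr A B Q g l k))
          = (fun a => v Fin.elim0 a l) := by
        funext a
        have h1 := hv_inv (1, g.2) Fin.elim0 a l
        rw [Subsingleton.elim (fun i => aYr A B (1, g.2) (Fin.elim0 i) : Fin 0 → A × B)
          Fin.elim0] at h1
        have h2 : (fun j => aZr A B (1, g.2) (a j)) = a := by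
          funext j
          show (1 : A) * a j = a j
          rw [one_mul]
        rw [h2] at h1
        exact h1
      show selPrim A (q + 1) K C (fun a => v Fin.elim0 a (fun k => aLr A B Q g l k))
        (fun j => aZr A B g (z j)) = selPrim A (q + 1) K C (fun a => v Fin.elim0 a l) z
      rw [hcl]
      exact (selPrim_spec (hex l)).1 g.1 z
    · exact ⟨K * C, fun y z l => (selPrim_spec (hex l)).2.2 z⟩
    · funext y z l
      show cb (selPrim A (q + 1) K C (fun a => v Fin.elim0 a l)) z = v y z l
      rw [← gcob_eq_cb, (selPrim_spec (hex l)).2.1]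
      rw [Subsingleton.elim y (Fin.elim0 : Fin 0 → A × B)]

/-- actions for the main bicomplex -/
def aYm : A × B → A × B → A × B := fun g y => g * y
def aZm : A × B → B → B := fun g b => g.2 * b
def aLm : A × B → PUnit.{1} → PUnit.{1} := fun _ l => l

theorem binary (hA : ∀ q : ℕ, 0 < q → HbVanishAt A q) (hB : ∀ q : ℕ, 0 < q → HbVanishAt B q) :
    ∀ q : ℕ, 0 < q → HbVanishAt (A × B) q := by
  have main : ∀ p (c : (Fin (p + 2) → A × B) → (Fin 0 → B) → PUnit.{1} → ℝ),
      Inv3 (aYm A B) (aZm A B) (aLm A B) c → Bdd3 c → dY c = 0 →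
      ∃ b : (Fin (p + 1) → A × B) → (Fin 0 → B) → PUnit.{1} → ℝ,
        Inv3 (aYm A B) (aZm A B) (aLm A B) b ∧ Bdd3 b ∧ dY b = c := by
    refine chaseMain (aYm A B) (aZm A B) (aLm A B) ?_ ?_ ?_
    · -- rows : from row_exact
      intro p q f hf_inv hf_bdd hf_dY
      have hc'_inv : Inv3 (aYr A B) (aZr A B) (aLr A B q)
          (fun y (_ : Fin 0 → A) zb => f y zb PUnit.unit) := by
        intro g y z l
        show f (fun i => g * y i) (fun k => aLr A B q g l k) PUnit.unit = f y l PUnit.unit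
        exact hf_inv g y l PUnit.unit
      have hc'_bdd : Bdd3 (fun y (_ : Fin 0 → A) zb => f y zb PUnit.unit) := by
        obtain ⟨C, hC⟩ := hf_bdd
        exact ⟨C, fun y z l => hC _ _ _⟩
      have hc'_dY : dY (fun y (_ : Fin 0 → A) zb => f y zb PUnit.unit) = 0 := by
        funext y z zb
        show dY f y zb PUnit.unit = 0
        rw [hf_dY]
        rfl
      obtain ⟨b', hb'_inv, hb'_bdd, hb'_dY⟩ := row_exact A B hA q p _ hc'_inv hc'_bdd hc'_dY
      refine ⟨fun y zb _ => b' y Fin.elim0 zb, ?_, ?_, ?_⟩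
      · intro g y z l
        have h1 := hb'_inv g y Fin.elim0 z
        rw [Subsingleton.elim (fun j => aZr A B g (Fin.elim0 j) : Fin 0 → A) Fin.elim0] at h1
        exact h1
      · obtain ⟨C, hC⟩ := hb'_bdd
        exact ⟨C, fun y z l => hC _ _ _⟩
      · funext y z l
        show dY b' y Fin.elim0 z = f y z l
        rw [hb'_dY]
    · -- columns : contraction via second projection
      refine contrCol (aYm A B) (aZm A B) (aLm A B) Prod.snd ?_
      intro g y
      show g.2 * y.2 = (g * y).2
      rfl
    · -- edge : bounded acyclicity of B
      intro q v hv_inv hv_bdd hv_dZ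
      have hc_inv : IsInvCochain (fun z : Fin (q + 2) → B => v Fin.elim0 z PUnit.unit) := by
        intro β z
        have h1 := hv_inv (1, β) Fin.elim0 z PUnit.unit
        rw [Subsingleton.elim (fun i => aYm A B (1, β) (Fin.elim0 i) : Fin 0 → A × B)
          Fin.elim0] at h1
        exact h1
      have hc_bdd : IsBddFun (fun z : Fin (q + 2) → B => v Fin.elim0 z PUnit.unit) := by
        obtain ⟨C, hC⟩ := hv_bdd
        exact ⟨C, fun z => hC _ _ _⟩
      have hc_cb : gcoboundary (fun z : Fin (q + 2) → B => v Fin.elim0 z PUnit.unit) = 0 := by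
        funext z
        exact congrFun (congrFun (congrFun hv_dZ Fin.elim0) z) PUnit.unit
      obtain ⟨b, hb_inv, hb_bdd, hb_cb⟩ := hB (q + 1) (Nat.succ_pos q) _ hc_inv hc_bdd hc_cb
      refine ⟨fun _ z _ => b z, ?_, ?_, ?_⟩
      · intro g y z l
        exact hb_inv g.2 z
      · obtain ⟨C, hC⟩ := hb_bdd
        exact ⟨C, fun y z l => hC _⟩
      · funext y z l
        show cb b z = v y z l
        rw [← gcob_eq_cb, hb_cb]
        rw [Subsingleton.elim y (Fin.elim0 : Fin 0 → A × B)]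
  intro q hq c hc_inv hc_bdd hc_cb
  obtain ⟨p, rfl⟩ : ∃ p, q = p + 1 := ⟨q - 1, by omega⟩
  have h3_inv : Inv3 (aYm A B) (aZm A B) (aLm A B)
      (fun y (_ : Fin 0 → B) (_ : PUnit.{1}) => c y) := by
    intro g y z l
    exact hc_inv g y
  have h3_bdd : Bdd3 (fun y (_ : Fin 0 → B) (_ : PUnit.{1}) => c y) := by
    obtain ⟨C, hC⟩ := hc_bdd
    exact ⟨C, fun y z l => hC _⟩
  have h3_dY : dY (fun y (_ : Fin 0 → B) (_ : PUnit.{1}) => c y) = 0 := by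
    funext y z l
    show cb c y = 0
    rw [← gcob_eq_cb, hc_cb]
    rfl
  obtain ⟨b3, hb3_inv, hb3_bdd, hb3_dY⟩ := main p _ h3_inv h3_bdd h3_dY
  refine ⟨fun x => b3 x Fin.elim0 PUnit.unit, ?_, ?_, ?_⟩
  · intro g x
    have h1 := hb3_inv g x Fin.elim0 PUnit.unit
    rw [Subsingleton.elim (fun j => aZm A B g (Fin.elim0 j) : Fin 0 → B) Fin.elim0] at h1
    exact h1
  · obtain ⟨C, hC⟩ := hb3_bdd
    exact ⟨C, fun x => hC _ _ _⟩
  · funext x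
    show cb (fun y => b3 y Fin.elim0 PUnit.unit) x = c x
    have := congrFun (congrFun (congrFun hb3_dY x) Fin.elim0) PUnit.unit
    exact this

end Binary

end PBA

namespace PBA

theorem transport {G₁ G₂ : Type*} [Group G₁] [Group G₂] (e : G₁ ≃* G₂)
    (h : ∀ q : ℕ, 0 < q → HbVanishAt G₁ q) : ∀ q : ℕ, 0 < q → HbVanishAt G₂ q := by
  intro q hq c hc_inv hc_bdd hc_cb
  have hc₁_inv : IsInvCochain (fun x : Fin (q + 1) → G₁ => c (fun i => e (x i))) := by
    intro g x
    show c (fun i => e (g * x i)) = c (fun i => e (x i))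
    have h1 : (fun i => e (g * x i)) = fun i => e g * e (x i) := by
      funext i
      rw [map_mul]
    rw [h1]
    exact hc_inv (e g) (fun i => e (x i))
  have hc₁_bdd : IsBddFun (fun x : Fin (q + 1) → G₁ => c (fun i => e (x i))) := by
    obtain ⟨C, hC⟩ := hc_bdd
    exact ⟨C, fun x => hC _⟩
  have hc₁_cb : gcoboundary (fun x : Fin (q + 1) → G₁ => c (fun i => e (x i))) = 0 := by
    funext x
    show (∑ i : Fin (q + 2), (-1:ℝ)^(i:ℕ) * c (fun k => e ((x ∘ i.succAbove) k))) = 0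
    have h1 := congrFun hc_cb (fun i => e (x i))
    rw [show gcoboundary c (fun i => e (x i))
      = ∑ i : Fin (q + 2), (-1:ℝ)^(i:ℕ) * c ((fun k => e (x k)) ∘ i.succAbove) from rfl] at h1
    exact h1
  obtain ⟨b₁, hb₁_inv, hb₁_bdd, hb₁_cb⟩ := h q hq _ hc₁_inv hc₁_bdd hc₁_cb
  refine ⟨fun x => b₁ (fun i => e.symm (x i)), ?_, ?_, ?_⟩
  · intro g x
    show b₁ (fun i => e.symm (g * x i)) = b₁ (fun i => e.symm (x i))
    have h1 : (fun i => e.symm (g * x i)) = fun i => e.symm g * e.symm (x i) := by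
      funext i
      rw [map_mul]
    rw [h1]
    exact hb₁_inv (e.symm g) (fun i => e.symm (x i))
  · obtain ⟨C, hC⟩ := hb₁_bdd
    exact ⟨C, fun x => hC _⟩
  · funext x
    show (∑ i : Fin (q + 1), (-1:ℝ)^(i:ℕ) * b₁ ((fun k => e.symm (x k)) ∘ i.succAbove)) = c x
    have h1 := congrFun hb₁_cb (fun i => e.symm (x i))
    rw [show gcoboundary b₁ (fun i => e.symm (x i))
      = ∑ i : Fin (q + 1), (-1:ℝ)^(i:ℕ) * b₁ ((fun k => e.symm (x k)) ∘ i.succAbove) from rfl] at h1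
    rw [h1]
    show c (fun i => e (e.symm (x i))) = c x
    have h2 : (fun i => e (e.symm (x i))) = x := by
      funext i
      rw [MulEquiv.apply_symm_apply]
    rw [h2]

lemma altsum (m : ℕ) : (∑ i : Fin m, (-1:ℝ)^(i:ℕ)) = if Even m then 0 else 1 := by
  induction m with
  | zero => simp
  | succ m ih =>
    rw [Fin.sum_univ_castSucc]
    simp only [Fin.coe_castSucc, Fin.val_last, ih, Nat.even_add_one]
    rcases Nat.even_or_odd m with h | h
    · rw [if_pos h, if_neg (by simpa using h), h.neg_one_pow]
      ring
    · rw [if_neg (by simpa using h), if_pos (by simpa using h), h.neg_one_pow]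
      ring

theorem trivialHb (G : Type*) [Group G] [Subsingleton G] :
    ∀ q : ℕ, 0 < q → HbVanishAt G q := by
  intro q hq c hc_inv hc_bdd hc_cb
  have hconst : ∀ x : Fin (q + 1) → G, c x = c (fun _ => 1) := fun x => by
    rw [Subsingleton.elim x (fun _ => 1)]
  have h0 : (∑ i : Fin (q + 2), (-1:ℝ)^(i:ℕ)) * c (fun _ => 1) = 0 := by
    have h1 := congrFun hc_cb (fun _ => (1:G))
    rw [show gcoboundary c (fun _ => (1:G))
      = ∑ i : Fin (q + 2), (-1:ℝ)^(i:ℕ) * c ((fun _ => (1:G)) ∘ i.succAbove) from rfl] at h1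
    rw [Finset.sum_congr rfl (fun i _ => by
      rw [hconst ((fun _ => (1:G)) ∘ i.succAbove)])] at h1
    rw [← Finset.sum_mul] at h1
    exact h1
  rcases Nat.even_or_odd q with he | ho
  · refine ⟨fun _ => c (fun _ => 1), fun g x => rfl, ⟨|c (fun _ => 1)|, fun x => le_refl _⟩, ?_⟩
    funext x
    show (∑ i : Fin (q + 1), (-1:ℝ)^(i:ℕ) * c (fun _ => 1)) = c x
    rw [← Finset.sum_mul, altsum, if_neg (by simpa [Nat.even_add_one] using he), one_mul,
      hconst x]
  · have hκ : c (fun _ => 1) = 0 := by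
      have h2 : (∑ i : Fin (q + 2), (-1:ℝ)^(i:ℕ)) = 1 := by
        rw [altsum, if_neg]
        intro hcon
        rw [Nat.even_add] at hcon
        simp at hcon
        exact (Nat.not_even_iff_odd.mpr ho) hcon
      rw [h2, one_mul] at h0
      exact h0
    refine ⟨fun _ => 0, fun g x => rfl, ⟨0, fun x => by simp⟩, ?_⟩
    funext x
    show (∑ i : Fin (q + 1), (-1:ℝ)^(i:ℕ) * (0:ℝ)) = c x
    rw [hconst x, hκ]
    simp

/-- splitting off the first factor of a finite product of groups -/
def piSplit (n : ℕ) (G : Fin (n + 1) → Type*) [∀ i, Group (G i)] :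
    (∀ i, G i) ≃* (G 0) × (∀ i : Fin n, G i.succ) where
  toFun f := (f 0, fun i => f i.succ)
  invFun p := Fin.cons p.1 p.2
  left_inv f := by
    funext i
    refine Fin.cases ?_ (fun m => ?_) i
    · simp
    · simp
  right_inv p := by
    refine Prod.ext ?_ ?_
    · simp
    · funext i
      simp
  map_mul' f g := rfl

end PBA

/-- a finite direct product of boundedly acyclic groups is boundedly
acyclic. -/
theorem finite_product_boundedly_acyclic {n : ℕ} (G : Fin n → Type*)
    [∀ i, Group (G i)] (h : ∀ i, ∀ q : ℕ, 0 < q → HbVanishAt (G i) q) :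
    ∀ q : ℕ, 0 < q → HbVanishAt (∀ i, G i) q := by
  induction n with
  | zero =>
    haveI : Subsingleton (∀ i : Fin 0, G i) := ⟨fun a b => funext fun i => i.elim0⟩
    exact PBA.trivialHb _
  | succ n ih =>
    exact PBA.transport (PBA.piSplit n G).symm
      (PBA.binary (G 0) (∀ i : Fin n, G i.succ) (h 0)
        (ih (fun i => G i.succ) (fun i => h i.succ)))
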